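/- Let G be a connected graph on n vertices with diameter d ≥ 3. Then the distance signless Laplacian spectral radius satisfies ∂_1^Q(G) > 2n − 4 + 2d. -/

import Mathlib

open Finset Matrix Polynomial SimpleGraph

variable {V : Type*} [Fintype V] [DecidableEq V]

/-- The distance matrix of a graph: entries are graph distances (as reals). -/
noncomputable def distMatrix (G : SimpleGraph V) : Matrix V V ℝ :=
  fun i j => (G.dist i j : ℝ)

/-- The transmission of a vertex: sum of distances to all vertices. -/
noncomputable def transmission (G : SimpleGraph V) (i : V) : ℝ :=
  ∑ j, (G.dist i j : ℝ)

/-- The distance Laplacian matrix `L(G) = Tr(G) - D(G)`. -/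
noncomputable def distLaplacian (G : SimpleGraph V) : Matrix V V ℝ :=
  Matrix.diagonal (transmission G) - distMatrix G

/-- The distance signless Laplacian matrix `Q(G) = Tr(G) + D(G)`. -/
noncomputable def distSignlessLaplacian (G : SimpleGraph V) : Matrix V V ℝ :=
  Matrix.diagonal (transmission G) + distMatrix G

/-- `μ` is an eigenvalue of the matrix `A`. -/
def IsEigOf (A : Matrix V V ℝ) (μ : ℝ) : Prop :=
  ∃ x : V → ℝ, x ≠ 0 ∧ A.mulVec x = μ • x

/-- Largest eigenvalue (spectral radius for our PSD matrices). -/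
noncomputable def maxEig (A : Matrix V V ℝ) : ℝ := sSup {μ : ℝ | IsEigOf A μ}

/-- Smallest eigenvalue. -/
noncomputable def minEig (A : Matrix V V ℝ) : ℝ := sInf {μ : ℝ | IsEigOf A μ}

/-- The Wiener index: half the sum of all pairwise distances. -/
noncomputable def wienerIndex (G : SimpleGraph V) : ℝ :=
  (1 / 2) * ∑ i, ∑ j, (G.dist i j : ℝ)

lemma rayleigh_le_maxEig' (A : Matrix V V ℝ) (hA : A.IsHermitian) (x : V → ℝ) (hx : x ≠ 0) :
    (∑ i, ∑ j, A i j * x j * x i) ≤ maxEig A * (∑ i, x i ^ 2) := by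
  classical
  set E := EuclideanSpace ℝ V
  set T : E →ₗ[ℝ] E := Matrix.toEuclideanLin A with hT_def
  have hT : T.IsSymmetric := Matrix.isHermitian_iff_isSymmetric.mp hA
  set x₀ : E := (WithLp.equiv 2 (V → ℝ)).symm x with hx₀_def
  have hx₀ : x₀ ≠ 0 := by
    rw [hx₀_def, ne_eq, WithLp.equiv_symm_apply, WithLp.toLp_eq_zero]; exact hx
  haveI : Nontrivial E := nontrivial_of_ne x₀ 0 hx₀
  -- the Rayleigh quotient function
  set R : {y : E // y ≠ 0} → ℝ :=
    fun y => RCLike.re (inner ℝ (T y.1) y.1 : ℝ) / ‖(y : E)‖ ^ 2 with hR_def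
  have hRval : ∀ y : {y : E // y ≠ 0}, R y = (inner ℝ (T y.1) y.1 : ℝ) / ‖(y : E)‖ ^ 2 := by
    intro y; rw [hR_def]; simp [RCLike.re_to_real]
  -- range of R is bounded above
  have hRbdd : BddAbove (Set.range R) := by
    set Tc := LinearMap.toContinuousLinearMap T
    refine ⟨‖Tc‖, ?_⟩
    rintro r ⟨⟨y, hy⟩, rfl⟩
    have hy' : ‖y‖ ≠ 0 := norm_ne_zero_iff.mpr hy
    have hy2 : (0:ℝ) < ‖y‖ ^ 2 := by positivity
    rw [hRval]
    rw [div_le_iff₀ hy2]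
    calc (inner ℝ (T y) y : ℝ) ≤ ‖T y‖ * ‖y‖ := real_inner_le_norm _ _
      _ = ‖Tc y‖ * ‖y‖ := rfl
      _ ≤ (‖Tc‖ * ‖y‖) * ‖y‖ := by
          have := Tc.le_opNorm y
          nlinarith [norm_nonneg y]
      _ = ‖Tc‖ * ‖y‖ ^ 2 := by ring
  have hμeig := hT.hasEigenvalue_iSup_of_finiteDimensional
  set μ : ℝ := (⨆ y : {y : E // y ≠ 0}, RCLike.re (inner ℝ (T y.1) y.1 : ℝ) / ‖(y : E)‖ ^ 2)
    with hμ_def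
  have hμR : μ = ⨆ y, R y := by rw [hμ_def, hR_def]
  -- μ is an eigenvalue of A
  obtain ⟨y, hy⟩ := hμeig.exists_hasEigenvector
  have hy0 : y ≠ 0 := hy.right
  have hy_eq : T y = μ • y := by
    have := hy.apply_eq_smul
    simpa using this
  have hμ_mem : μ ∈ {μ : ℝ | IsEigOf A μ} := by
    refine ⟨(WithLp.equiv 2 (V → ℝ)) y, by simpa [WithLp.equiv] using hy0, ?_⟩
    have h1 := Matrix.piLp_ofLp_toEuclideanLin A y
    rw [hy_eq] at h1
    exact h1.symm
  -- every eigenvalue is at most μ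
  have hub : ∀ ν ∈ {μ : ℝ | IsEigOf A μ}, ν ≤ μ := by
    rintro ν ⟨z, hz0, hz⟩
    set z₀ : E := (WithLp.equiv 2 (V → ℝ)).symm z with hz₀_def
    have hz₀ : z₀ ≠ 0 := by rw [hz₀_def, ne_eq, WithLp.equiv_symm_apply, WithLp.toLp_eq_zero]; exact hz0
    have hTz : T z₀ = ν • z₀ := by
      rw [hT_def, hz₀_def, WithLp.equiv_symm_apply, Matrix.toEuclideanLin_apply_piLp_toLp, hz]
      simp
    have hinner : (inner ℝ (T z₀) z₀ : ℝ) = ν * ‖z₀‖ ^ 2 := by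
      rw [hTz, real_inner_smul_left, real_inner_self_eq_norm_sq]
    have hz2 : (0:ℝ) < ‖z₀‖ ^ 2 := by
      have : ‖z₀‖ ≠ 0 := norm_ne_zero_iff.mpr hz₀
      positivity
    have : R ⟨z₀, hz₀⟩ = ν := by
      rw [hRval]; rw [hinner]; exact mul_div_cancel_right₀ ν hz2.ne'
    calc ν = R ⟨z₀, hz₀⟩ := this.symm
      _ ≤ ⨆ y, R y := le_ciSup hRbdd _
      _ = μ := hμR.symm
  have hbdd : BddAbove {μ : ℝ | IsEigOf A μ} := ⟨μ, hub⟩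
  have hsup : μ ≤ maxEig A := le_csSup hbdd hμ_mem
  -- Rayleigh quotient of x is at most μ
  have hx2 : (0:ℝ) < ∑ i, x i ^ 2 := by
    obtain ⟨i, hi⟩ := Function.ne_iff.mp hx
    have : (0:ℝ) < x i ^ 2 := pow_two_pos_of_ne_zero hi
    exact Finset.sum_pos' (fun j _ => sq_nonneg _) ⟨i, Finset.mem_univ i, this⟩
  have hnorm : ‖x₀‖ ^ 2 = ∑ i, x i ^ 2 := by
    rw [← real_inner_self_eq_norm_sq]
    rw [PiLp.inner_apply]
    simp only [RCLike.inner_apply, starRingEnd_apply, star_trivial]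
    show ∑ i, x i * x i = ∑ i, x i ^ 2
    simp [sq]
  have hinner_x : (inner ℝ (T x₀) x₀ : ℝ) = ∑ i, ∑ j, A i j * x j * x i := by
    rw [hT_def, hx₀_def, WithLp.equiv_symm_apply, Matrix.toEuclideanLin_apply_piLp_toLp]
    rw [PiLp.inner_apply]
    simp only [RCLike.inner_apply, starRingEnd_apply, star_trivial]
    refine Finset.sum_congr rfl fun i _ => ?_
    show x i * (A.mulVec x i) = ∑ j, A i j * x j * x i
    rw [mul_comm, Matrix.mulVec, dotProduct, Finset.sum_mul]
  have hRx : R ⟨x₀, hx₀⟩ = (∑ i, ∑ j, A i j * x j * x i) / (∑ i, x i ^ 2) := by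
    rw [hRval, hinner_x, hnorm]
  have hle : (∑ i, ∑ j, A i j * x j * x i) / (∑ i, x i ^ 2) ≤ maxEig A := by
    calc (∑ i, ∑ j, A i j * x j * x i) / (∑ i, x i ^ 2) = R ⟨x₀, hx₀⟩ := hRx.symm
      _ ≤ ⨆ y, R y := le_ciSup hRbdd _
      _ = μ := hμR.symm
      _ ≤ maxEig A := hsup
    
  rw [div_le_iff₀ hx2] at hle
  linarith [hle]

/-- For a connected graph on `n` vertices of diameter `d ≥ 3`,
the distance signless Laplacian spectral radius exceeds `2n − 4 + 2d`. -/
theorem stmt15 (G : SimpleGraph V) (hG : G.Connected) (hd : 3 ≤ G.diam) :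
    2 * (Fintype.card V : ℝ) - 4 + 2 * (G.diam : ℝ) <
      maxEig (distSignlessLaplacian G) := by
  classical
  haveI : Nonempty V := hG.nonempty
  obtain ⟨u, v, huv⟩ := G.exists_dist_eq_diam
  set n : ℕ := Fintype.card V with hn_def
  set d : ℕ := G.diam with hd_def
  have hduv : G.dist u v = d := huv
  have hune : u ≠ v := by
    intro h; rw [h, SimpleGraph.dist_self] at hduv; omega
  obtain ⟨p, hp⟩ := G.exists_walk_of_dist_ne_zero (by omega : G.dist u v ≠ 0)
  set w := p.getVert 1 with hw_def
  have hplen : 0 < p.length := by rw [hp]; omega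
  have hadj : G.Adj u w := by
    have := p.adj_getVert_succ (i := 0) hplen
    rwa [SimpleGraph.Walk.getVert_zero] at this
  have hwu : w ≠ u := hadj.ne'
  have hdwv : d ≤ 1 + G.dist w v := by
    have htri := hG.dist_triangle (u := u) (v := w) (w := v)
    have h1 : G.dist u w = 1 := SimpleGraph.dist_eq_one_iff_adj.mpr hadj
    omega
  have hwv : w ≠ v := by
    intro h; rw [h, SimpleGraph.dist_self] at hdwv; omega
  have hn3 : 3 ≤ n := by
    have hcard : ({u, v, w} : Finset V).card = 3 := by
      rw [Finset.card_insert_of_notMem (by simp [hune, Ne.symm hwu, Ne.symm hwv]),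
        Finset.card_insert_of_notMem (by simp [hune, Ne.symm hwu, Ne.symm hwv]), Finset.card_singleton]
    calc 3 = ({u, v, w} : Finset V).card := hcard.symm
      _ ≤ Fintype.card V := Finset.card_le_univ _
  -- basic distance facts, real-valued
  have hdist_nonneg : ∀ i j : V, (0:ℝ) ≤ (G.dist i j : ℝ) := fun i j => Nat.cast_nonneg _
  have hrowUV : ∀ i : V, (d:ℝ) ≤ (G.dist u i : ℝ) + (G.dist v i : ℝ) := by
    intro i
    have htri := hG.dist_triangle (u := u) (v := i) (w := v)
    have hc : G.dist i v = G.dist v i := G.dist_comm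
    have : d ≤ G.dist u i + G.dist v i := by omega
    exact_mod_cast this
  -- transmission of u plus transmission of v
  have hT : (n:ℝ) * d ≤ transmission G u + transmission G v := by
    have : ∀ i : V, (d:ℝ) ≤ (G.dist u i : ℝ) + (G.dist v i : ℝ) := hrowUV
    calc (n:ℝ) * d = ∑ _i : V, (d:ℝ) := by
          rw [Finset.sum_const, Finset.card_univ, nsmul_eq_mul]
      _ ≤ ∑ i : V, ((G.dist u i : ℝ) + (G.dist v i : ℝ)) :=
          Finset.sum_le_sum (fun i _ => hrowUV i)
      _ = transmission G u + transmission G v := by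
          rw [Finset.sum_add_distrib]; rfl
  -- lower bound on each off-{u,v} transmission
  have huv_subset : ({u, v} : Finset V) ⊆ Finset.univ := Finset.subset_univ _
  have hcard_uv : ({u, v} : Finset V).card = 2 := by
    rw [Finset.card_insert_of_notMem (by simp [hune]), Finset.card_singleton]
  have hcard_sdiff : (Finset.univ \ ({u, v} : Finset V)).card = n - 2 := by
    rw [Finset.card_sdiff_of_subset huv_subset, Finset.card_univ, hcard_uv]
  have htrans_off : ∀ i ∈ Finset.univ \ ({u, v} : Finset V),
      ((n:ℝ) - 3) + (d:ℝ) ≤ transmission G i := by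
    intro i hi
    simp only [Finset.mem_sdiff, Finset.mem_insert, Finset.mem_singleton] at hi
    have hiu : i ≠ u := fun h => hi.2 (Or.inl h)
    have hiv : i ≠ v := fun h => hi.2 (Or.inr h)
    have hsplit : transmission G i
        = (∑ j ∈ Finset.univ \ ({u, v} : Finset V), (G.dist i j : ℝ))
          + ((G.dist i u : ℝ) + (G.dist i v : ℝ)) := by
      rw [transmission, ← Finset.sum_sdiff huv_subset]
      congr 1
      rw [Finset.sum_insert (by simp [hune]), Finset.sum_singleton]
    have h1 : ((n:ℝ) - 3) ≤ ∑ j ∈ Finset.univ \ ({u, v} : Finset V), (G.dist i j : ℝ) := by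
      have hmem : i ∈ Finset.univ \ ({u, v} : Finset V) := by
        simp [hiu, hiv]
      have hsub : (Finset.univ \ ({u, v} : Finset V)).erase i ⊆ Finset.univ \ ({u, v} : Finset V) :=
        Finset.erase_subset _ _
      have hcard_erase : ((Finset.univ \ ({u, v} : Finset V)).erase i).card = n - 3 := by
        rw [Finset.card_erase_of_mem hmem, hcard_sdiff]; omega
      calc ((n:ℝ) - 3) = (((n - 3 : ℕ)):ℝ) := by
            have : (3:ℕ) ≤ n := hn3
            push_cast [Nat.cast_sub this]; ring
        _ = ∑ _j ∈ (Finset.univ \ ({u, v} : Finset V)).erase i, (1:ℝ) := by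
            rw [Finset.sum_const, hcard_erase, nsmul_eq_mul, mul_one]
        _ ≤ ∑ j ∈ (Finset.univ \ ({u, v} : Finset V)).erase i, (G.dist i j : ℝ) := by
            refine Finset.sum_le_sum (fun j hj => ?_)
            have hji : j ≠ i := Finset.ne_of_mem_erase hj
            have : 0 < G.dist i j := hG.pos_dist_of_ne (Ne.symm hji)
            exact_mod_cast this
        _ ≤ ∑ j ∈ Finset.univ \ ({u, v} : Finset V), (G.dist i j : ℝ) :=
            Finset.sum_le_sum_of_subset_of_nonneg hsub (fun j _ _ => hdist_nonneg i j)
    have h2 : (d:ℝ) ≤ (G.dist i u : ℝ) + (G.dist i v : ℝ) := by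
      have := hrowUV i
      rw [G.dist_comm (u := u) (v := i), G.dist_comm (u := v) (v := i)] at this
      exact this
    rw [hsplit]; linarith
  -- lower bound on the total sum S
  have hS : (n:ℝ) * d + ((n:ℝ) - 2) * ((n:ℝ) - 3 + d) ≤ ∑ i, transmission G i := by
    have hsplit : ∑ i, transmission G i
        = (∑ i ∈ Finset.univ \ ({u, v} : Finset V), transmission G i)
          + (transmission G u + transmission G v) := by
      rw [← Finset.sum_sdiff huv_subset]
      congr 1
      rw [Finset.sum_insert (by simp [hune]), Finset.sum_singleton]
    have h1 : ((n:ℝ) - 2) * ((n:ℝ) - 3 + d)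
        ≤ ∑ i ∈ Finset.univ \ ({u, v} : Finset V), transmission G i := by
      calc ((n:ℝ) - 2) * ((n:ℝ) - 3 + d)
          = (((n - 2 : ℕ)):ℝ) * ((n:ℝ) - 3 + d) := by
            have : (2:ℕ) ≤ n := by omega
            push_cast [Nat.cast_sub this]; ring
        _ = ∑ _i ∈ Finset.univ \ ({u, v} : Finset V), ((n:ℝ) - 3 + d) := by
            rw [Finset.sum_const, hcard_sdiff, nsmul_eq_mul]
        _ ≤ ∑ i ∈ Finset.univ \ ({u, v} : Finset V), transmission G i :=
            Finset.sum_le_sum htrans_off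
    rw [hsplit]; linarith
  -- the signless Laplacian and its properties
  set Q := distSignlessLaplacian G with hQ_def
  have hQapp : ∀ i j, Q i j = (if i = j then transmission G i else 0) + (G.dist i j : ℝ) := by
    intro i j
    rw [hQ_def, distSignlessLaplacian]
    simp [Matrix.add_apply, Matrix.diagonal_apply, distMatrix]
  have hQherm : Q.IsHermitian := by
    show Qᴴ = Q
    ext i j
    simp only [Matrix.conjTranspose_apply, star_trivial, hQapp]
    rw [G.dist_comm]
    congr 1
    by_cases h : i = j
    · subst h; simp
    · rw [if_neg h, if_neg (Ne.symm h)]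
  set x : V → ℝ := fun i => if i = u ∨ i = v then 2 else 1 with hx_def
  have hx_ne : x ≠ 0 := by
    intro h
    have := congrFun h u
    simp [hx_def] at this
  have hx1 : ∀ i, x i = 1 + ((if i = u then (1:ℝ) else 0) + (if i = v then 1 else 0)) := by
    intro i
    by_cases h1 : i = u
    · subst h1; simp [hx_def, hune]; norm_num
    · by_cases h2 : i = v
      · subst h2; simp [hx_def, h1]; norm_num
      · simp [hx_def, h1, h2]
  have hsplit : ∀ g : V → ℝ, ∑ j, g j * x j = (∑ j, g j) + (g u + g v) := by
    intro g
    have key : ∀ j, g j * x j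
        = g j + ((if j = u then g j else 0) + (if j = v then g j else 0)) := by
      intro j
      rw [hx1 j]
      split_ifs <;> ring
    rw [Finset.sum_congr rfl (fun j _ => key j), Finset.sum_add_distrib,
      Finset.sum_add_distrib, Finset.sum_ite_eq' Finset.univ u g,
      Finset.sum_ite_eq' Finset.univ v g]
    simp
  have hrowQ : ∀ i, ∑ j, Q i j = 2 * transmission G i := by
    intro i
    rw [Finset.sum_congr rfl (fun j _ => hQapp i j), Finset.sum_add_distrib]
    rw [Finset.sum_ite_eq Finset.univ i (fun _ => transmission G i)]
    simp [transmission]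
    ring
  have hcolQ : ∀ j₀ : V, ∑ i, Q i j₀ = 2 * transmission G j₀ := by
    intro j₀
    rw [Finset.sum_congr rfl (fun i _ => hQapp i j₀), Finset.sum_add_distrib]
    rw [Finset.sum_ite_eq' Finset.univ j₀ (fun i => transmission G i)]
    have hc : ∑ i, (G.dist i j₀ : ℝ) = transmission G j₀ := by
      rw [transmission]
      exact Finset.sum_congr rfl fun i _ => by rw [G.dist_comm]
    simp [hc]
    ring
  have hxu : x u = 2 := by simp [hx_def]
  have hxv : x v = 2 := by simp [hx_def]
  have hQuu : Q u u = transmission G u := by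
    rw [hQapp]; simp [SimpleGraph.dist_self]
  have hQvv : Q v v = transmission G v := by
    rw [hQapp]; simp [SimpleGraph.dist_self]
  have hQuv : Q u v = (d:ℝ) := by
    rw [hQapp]; simp [hune, hduv]
  have hQvu : Q v u = (d:ℝ) := by
    rw [hQapp]
    have : G.dist v u = d := by rw [G.dist_comm]; exact hduv
    simp [Ne.symm hune, this]
  set N := ∑ i, ∑ j, Q i j * x j * x i with hN_def
  have hstep1 : ∀ i, ∑ j, Q i j * x j = 2 * transmission G i + (Q i u + Q i v) := by
    intro i
    rw [hsplit (fun j => Q i j), hrowQ i]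
  have hNval : N = 2 * (∑ i, transmission G i)
      + 5 * (transmission G u + transmission G v) + 2 * (d:ℝ) := by
    rw [hN_def]
    have e1 : ∀ i, ∑ j, Q i j * x j * x i
        = (fun i => 2 * transmission G i + (Q i u + Q i v)) i * x i := by
      intro i
      rw [← Finset.sum_mul, hstep1 i]
    rw [Finset.sum_congr rfl (fun i _ => e1 i),
      hsplit (fun i => 2 * transmission G i + (Q i u + Q i v))]
    rw [Finset.sum_add_distrib, ← Finset.mul_sum, Finset.sum_add_distrib,
      hcolQ u, hcolQ v, hQuu, hQvv, hQuv, hQvu]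
    ring
  have hsum_x : ∑ j, x j = (n:ℝ) + 2 := by
    have h1 : ∑ j, (1:ℝ) * x j = (∑ _j : V, (1:ℝ)) + (1 + 1) := hsplit (fun _ => 1)
    have h2 : ∑ _j : V, (1:ℝ) = (n:ℝ) := by
      rw [Finset.sum_const, Finset.card_univ, nsmul_eq_mul, mul_one]
    simp only [one_mul] at h1
    rw [h1, h2]; ring
  have hden : ∑ i, x i ^ 2 = (n:ℝ) + 6 := by
    have h0 : ∑ i, x i ^ 2 = ∑ i, x i * x i := by
      exact Finset.sum_congr rfl fun i _ => sq (x i)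
    rw [h0, hsplit x, hsum_x, hxu, hxv]
    ring
  have hray := rayleigh_le_maxEig' Q hQherm x hx_ne
  rw [hden] at hray
  have hd3' : (3:ℝ) ≤ (d:ℝ) := by exact_mod_cast hd
  have hn3' : (3:ℝ) ≤ (n:ℝ) := by exact_mod_cast hn3
  have hfin : (2*(n:ℝ) - 4 + 2*(d:ℝ)) * ((n:ℝ) + 6) < N := by
    rw [hNval]
    nlinarith [hS, hT, mul_nonneg (by linarith : (0:ℝ) ≤ (n:ℝ) - 3)
      (by linarith : (0:ℝ) ≤ (d:ℝ) - 3)]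
  have hlt : (2*(n:ℝ) - 4 + 2*(d:ℝ)) * ((n:ℝ) + 6) < maxEig Q * ((n:ℝ) + 6) :=
    lt_of_lt_of_le hfin hray
  exact lt_of_mul_lt_mul_right hlt (by positivity : (0:ℝ) ≤ (n:ℝ) + 6)
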